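/- The generalized continued fraction with coefficients a(0) = 1, a(1) = 6, a(n) = 9n - 2 for n ≥ 2, b(0) = 1, and b(n) = -6n(3n + 1) for n ≥ 1 converges to the real cube root of 2; that is, its convergents pₙ/qₙ satisfy qₙ ≠ 0 for all sufficiently large n and pₙ/qₙ → 2^{1/3}. In particular 2^{1/3} ∈ 𝒞. -/

import Mathlib

/-- Numerators of the generalized continued fraction with partial
quotients `a` and partial numerators `b`:
`p₀ = a 0`, `p₁ = a 1 * a 0 + b 0`, `pₙ = a n * pₙ₋₁ + b (n-1) * pₙ₋₂`. -/
def cfP (a b : ℕ → ℚ) : ℕ → ℚ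
  | 0 => a 0
  | 1 => a 1 * a 0 + b 0
  | n + 2 => a (n + 2) * cfP a b (n + 1) + b (n + 1) * cfP a b n

/-- Denominators of the generalized continued fraction:
`q₀ = 1`, `q₁ = a 1`, `qₙ = a n * qₙ₋₁ + b (n-1) * qₙ₋₂`. -/
def cfQ (a b : ℕ → ℚ) : ℕ → ℚ
  | 0 => 1
  | 1 => a 1
  | n + 2 => a (n + 2) * cfQ a b (n + 1) + b (n + 1) * cfQ a b n

/-- The generalized continued fraction `a(0) + b(0)/(a(1) + b(1)/(a(2) + ⋯))`
converges to the real number `u`. -/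
def CFConvergesTo (a b : ℕ → ℚ) (u : ℝ) : Prop :=
  (∀ n, b n ≠ 0) ∧ (∃ N, ∀ n ≥ N, cfQ a b n ≠ 0) ∧
  Filter.Tendsto (fun n : ℕ => ((cfP a b n : ℝ) / (cfQ a b n : ℝ)))
    Filter.atTop (nhds u)

/-- The continued fraction has coefficients given by polynomials for all
sufficiently large indices. -/
def CFPolyType (a b : ℕ → ℚ) : Prop :=
  ∃ (A B : Polynomial ℚ) (N : ℕ), ∀ n ≥ N,
    a n = A.eval (n : ℚ) ∧ b n = B.eval (n : ℚ)

/-- A real number is of continued fraction type (belongs to `𝒞`) if some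
generalized continued fraction of polynomial type converges to it. -/
def CFType (u : ℝ) : Prop :=
  ∃ a b : ℕ → ℚ, CFPolyType a b ∧ CFConvergesTo a b u


open Filter Finset


/-- binomial coefficients for (1-x)^{-1/3} -/
noncomputable def ar : ℕ → ℝ
  | 0 => 1
  | k + 1 => ar k * (3 * k + 1) / (3 * (k + 1))

lemma ar_pos : ∀ k, 0 < ar k
  | 0 => one_pos
  | k + 1 => by
    rw [ar]
    have := ar_pos k
    positivity

lemma ar_le_one : ∀ k, ar k ≤ 1
  | 0 => le_refl 1
  | k + 1 => by
    rw [ar, div_le_one (by positivity)]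
    have h1 := ar_le_one k
    have h2 := (ar_pos k).le
    nlinarith

lemma ar_rec (k : ℕ) : 3 * ((k : ℝ) + 1) * ar (k + 1) = (3 * k + 1) * ar k := by
  rw [ar]
  have : (3 : ℝ) * ((k : ℝ) + 1) ≠ 0 := by positivity
  field_simp

noncomputable def S (n : ℕ) (x : ℝ) : ℝ := ∑ k ∈ Finset.range (n + 1), ar k * x ^ k

noncomputable def D (n : ℕ) (x : ℝ) : ℝ :=
  ∑ k ∈ Finset.range (n + 1), ar k * (k * x ^ (k - 1))

lemma hasDerivAt_S (n : ℕ) (x : ℝ) : HasDerivAt (fun y => S n y) (D n x) x := by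
  unfold S D
  exact HasDerivAt.fun_sum fun k _ => (hasDerivAt_pow k x).const_mul (ar k)

lemma key_identity (n : ℕ) (x : ℝ) :
    3 * (1 - x) * D n x - S n x = -(3 * n + 1) * ar n * x ^ n := by
  induction n with
  | zero => simp [S, D, ar]
  | succ n ih =>
    unfold S D at ih ⊢
    rw [Finset.sum_range_succ, Finset.sum_range_succ (f := fun k => ar k * x ^ k)]
    have hrec := ar_rec n
    push_cast [Nat.add_sub_cancel] at *
    linear_combination ih + x ^ n * hrec

noncomputable def hfun (n : ℕ) (x : ℝ) : ℝ := S n x * (1 - x) ^ ((1 : ℝ) / 3)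

noncomputable def hder (n : ℕ) (x : ℝ) : ℝ :=
  -((3 * n + 1) * ar n * x ^ n / 3) * (1 - x) ^ ((1 : ℝ) / 3 - 1)

lemma hasDerivAt_hfun (n : ℕ) {x : ℝ} (hx : 0 < 1 - x) :
    HasDerivAt (hfun n) (hder n x) x := by
  have h1 : HasDerivAt (fun y : ℝ => 1 - y) (-1) x := by
    simpa using (hasDerivAt_id x).const_sub 1
  have h2 : HasDerivAt (fun y : ℝ => (1 - y) ^ ((1 : ℝ) / 3))
      ((1 / 3 : ℝ) * (1 - x) ^ ((1 : ℝ) / 3 - 1) * (-1)) x :=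
    (Real.hasDerivAt_rpow_const (p := (1 : ℝ) / 3) (Or.inl hx.ne')).comp x h1
  have h3 := (hasDerivAt_S n x).fun_mul h2
  refine h3.congr_deriv (Eq.symm ?_)
  have hsplit : (1 - x) ^ ((1 : ℝ) / 3) = (1 - x) ^ ((1 : ℝ) / 3 - 1) * (1 - x) := by
    rw [show (1:ℝ)/3 = ((1:ℝ)/3 - 1) + 1 by ring, Real.rpow_add hx, Real.rpow_one]
    norm_num
  rw [hsplit]
  have hk := key_identity n x
  unfold hder
  linear_combination -((1 - x) ^ ((1 : ℝ) / 3 - 1) / 3) * hk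

lemma hder_bound (n : ℕ) {x : ℝ} (hx : x ∈ Set.Icc (0 : ℝ) (1 / 2)) :
    ‖hder n x‖ ≤ (2 * n + 1) * (1 / 2) ^ n := by
  obtain ⟨hx0, hx1⟩ := hx
  have h1x : (1 / 2 : ℝ) ≤ 1 - x := by linarith
  have h1xpos : (0 : ℝ) < 1 - x := by linarith
  have hxe : (1 - x) ^ ((1 : ℝ) / 3 - 1) ≤ 2 := by
    have h2 : (1 - x) ^ ((1 : ℝ) / 3 - 1) ≤ (1 - x) ^ (-1 : ℝ) := by
      apply Real.rpow_le_rpow_of_exponent_ge h1xpos (by linarith) (by norm_num)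
    have h3 : (1 - x) ^ (-1 : ℝ) = (1 - x)⁻¹ := Real.rpow_neg_one _
    have h4 : (1 - x)⁻¹ ≤ 2 := by
      rw [inv_le_comm₀ h1xpos (by norm_num)]
      linarith
    linarith [h2, h3 ▸ h2]
  have hxepos : (0 : ℝ) < (1 - x) ^ ((1 : ℝ) / 3 - 1) := Real.rpow_pos_of_pos h1xpos _
  have hxpow : x ^ n ≤ (1 / 2) ^ n := pow_le_pow_left₀ hx0 hx1 n
  have hxpownn : (0 : ℝ) ≤ x ^ n := pow_nonneg hx0 n
  have harp := ar_pos n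
  have harle := ar_le_one n
  unfold hder
  rw [Real.norm_eq_abs, abs_mul, abs_neg,
    abs_of_nonneg (by positivity : (0:ℝ) ≤ (3 * (n:ℝ) + 1) * ar n * x ^ n / 3),
    abs_of_pos hxepos]
  have hn : (0:ℝ) ≤ (n : ℝ) := Nat.cast_nonneg n
  have step1 : (3 * (n:ℝ) + 1) * ar n * x ^ n / 3 * (1 - x) ^ ((1 : ℝ) / 3 - 1)
      ≤ (3 * (n:ℝ) + 1) * ar n * x ^ n / 3 * 2 := by
    apply mul_le_mul_of_nonneg_left hxe (by positivity)
  refine step1.trans ?_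
  have : (3 * (n:ℝ) + 1) * ar n * x ^ n ≤ (3 * (n:ℝ) + 1) * (1/2) ^ n := by
    calc (3 * (n:ℝ) + 1) * ar n * x ^ n ≤ (3 * (n:ℝ) + 1) * 1 * (1/2) ^ n := by
          apply mul_le_mul (by nlinarith) hxpow hxpownn (by positivity)
      _ = (3 * (n:ℝ) + 1) * (1/2) ^ n := by ring
  nlinarith [pow_pos (by norm_num : (0:ℝ) < 1/2) n]

lemma S_zero (n : ℕ) : S n 0 = 1 := by
  unfold S
  rw [Finset.sum_eq_single 0]
  · simp [ar]
  · intro k _ hk; simp [zero_pow hk]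
  · intro h; simp at h

lemma hfun_diff_bound (n : ℕ) :
    ‖S n (1 / 2) * ((1 : ℝ) / 2) ^ ((1 : ℝ) / 3) - 1‖ ≤ (2 * n + 1) * (1 / 2) ^ n * (1 / 2) := by
  have hs : Convex ℝ (Set.Icc (0 : ℝ) (1 / 2)) := convex_Icc _ _
  have hmem0 : (0 : ℝ) ∈ Set.Icc (0 : ℝ) (1 / 2) := by constructor <;> norm_num
  have hmem1 : (1 / 2 : ℝ) ∈ Set.Icc (0 : ℝ) (1 / 2) := by constructor <;> norm_num
  have hb := hs.norm_image_sub_le_of_norm_hasDerivWithin_le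
    (f := hfun n) (f' := hder n) (C := (2 * n + 1) * (1 / 2) ^ n)
    (fun x hx => (hasDerivAt_hfun n (by
      obtain ⟨_, h⟩ := hx; linarith)).hasDerivWithinAt)
    (fun x hx => hder_bound n hx) hmem0 hmem1
  have h0 : hfun n 0 = 1 := by
    unfold hfun; rw [S_zero]; norm_num
  have h1 : hfun n (1 / 2) = S n (1 / 2) * ((1 : ℝ) / 2) ^ ((1 : ℝ) / 3) := by
    unfold hfun; norm_num
  rw [h0, h1] at hb
  have : ‖(1 / 2 : ℝ) - 0‖ = 1 / 2 := by norm_num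
  rw [this] at hb
  exact hb

lemma tendsto_S_half :
    Filter.Tendsto (fun n : ℕ => S n (1 / 2)) Filter.atTop (nhds ((2 : ℝ) ^ ((1 : ℝ) / 3))) := by
  set K : ℝ := (2 : ℝ) ^ ((1 : ℝ) / 3) with hK
  have hKpos : 0 < K := Real.rpow_pos_of_pos two_pos _
  have hhalf : ((1 : ℝ) / 2) ^ ((1 : ℝ) / 3) = K⁻¹ := by
    rw [hK, show (1 : ℝ) / 2 = (2 : ℝ)⁻¹ by norm_num,
      Real.inv_rpow (by norm_num : (0 : ℝ) ≤ 2)]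
  have t1 := tendsto_pow_const_mul_const_pow_of_abs_lt_one 1
    (r := (1 : ℝ) / 2) (by rw [abs_of_pos] <;> norm_num)
  have t2 := tendsto_pow_const_mul_const_pow_of_abs_lt_one 0
    (r := (1 : ℝ) / 2) (by rw [abs_of_pos] <;> norm_num)
  have tC : Filter.Tendsto (fun n : ℕ => (2 * (n : ℝ) + 1) * (1 / 2) ^ n * (1 / 2))
      Filter.atTop (nhds 0) := by
    have h := ((t1.const_mul 2).add t2).mul_const ((1 : ℝ) / 2)
    norm_num at h
    convert h using 2 with n
    ring
  have hsQ : Filter.Tendsto (fun n : ℕ => S n (1 / 2) * K⁻¹ - 1) Filter.atTop (nhds 0) := by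
    apply squeeze_zero_norm (fun n => ?_) tC
    have := hfun_diff_bound n
    rw [hhalf] at this
    exact this
  have hmain := (hsQ.mul_const K).add_const K
  norm_num at hmain
  convert hmain using 2 with n
  field_simp
  ring

def cq : ℕ → ℚ
  | 0 => 1
  | k + 1 => cq k * (3 * k + 1) / (6 * (k + 1))

def sQ (n : ℕ) : ℚ := ∑ k ∈ Finset.range (n + 1), cq k

lemma cq_cast (k : ℕ) : (cq k : ℝ) = ar k * (1 / 2) ^ k := by
  induction k with
  | zero => simp [cq, ar]
  | succ k ih =>
    rw [cq, ar]
    push_cast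
    rw [ih]
    have h1 : ((k : ℝ) + 1) ≠ 0 := by positivity
    rw [pow_succ]
    field_simp
    ring

lemma sQ_cast (n : ℕ) : (sQ n : ℝ) = S n (1 / 2) := by
  unfold sQ S
  push_cast
  exact Finset.sum_congr rfl fun k _ => by rw [cq_cast]

def aa : ℕ → ℚ := fun n => if n = 0 then 1 else if n = 1 then 6 else 9 * (n : ℚ) - 2
def bb : ℕ → ℚ := fun n => if n = 0 then 1 else -6 * (n : ℚ) * (3 * (n : ℚ) + 1)

lemma cf_formula : ∀ n : ℕ,
    (cfP aa bb n = 6 ^ n * Nat.factorial n * sQ n) ∧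
    (cfP aa bb (n + 1) = 6 ^ (n + 1) * Nat.factorial (n + 1) * sQ (n + 1)) := by
  intro n
  induction n with
  | zero =>
    constructor <;> norm_num [cfP, aa, bb, sQ, cq, Finset.sum_range_succ]
  | succ n ih =>
    obtain ⟨h1, h2⟩ := ih
    refine ⟨h2, ?_⟩
    have ea : aa (n + 2) = 9 * (n : ℚ) + 16 := by
      simp [aa]; push_cast; ring
    have eb : bb (n + 1) = -6 * ((n : ℚ) + 1) * (3 * (n : ℚ) + 4) := by
      simp only [bb, if_neg (Nat.succ_ne_zero n)]
      push_cast; ring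
    have hsq2 : sQ (n + 2) = sQ (n + 1) + cq (n + 2) := by
      unfold sQ; rw [Finset.sum_range_succ]
    have hsq1 : sQ (n + 1) = sQ n + cq (n + 1) := by
      unfold sQ; rw [Finset.sum_range_succ]
    have hcq : cq (n + 2) = cq (n + 1) * (3 * (n : ℚ) + 4) / (6 * ((n : ℚ) + 2)) := by
      show cq ((n + 1) + 1) = _
      rw [cq]; push_cast; ring_nf
    have hne : (6 : ℚ) * ((n : ℚ) + 2) ≠ 0 := by positivity
    show aa (n + 2) * cfP aa bb (n + 1) + bb (n + 1) * cfP aa bb n = _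
    rw [ea, eb, h1, h2, hsq2, hcq, hsq1, Nat.factorial_succ (n + 1), Nat.factorial_succ n]
    push_cast
    field_simp
    ring

lemma cfQ_formula : ∀ n : ℕ,
    (cfQ aa bb n = 6 ^ n * Nat.factorial n) ∧
    (cfQ aa bb (n + 1) = 6 ^ (n + 1) * Nat.factorial (n + 1)) := by
  intro n
  induction n with
  | zero => constructor <;> norm_num [cfQ, aa]
  | succ n ih =>
    obtain ⟨h1, h2⟩ := ih
    refine ⟨h2, ?_⟩
    have ea : aa (n + 2) = 9 * (n : ℚ) + 16 := by
      simp [aa]; push_cast; ring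
    have eb : bb (n + 1) = -6 * ((n : ℚ) + 1) * (3 * (n : ℚ) + 4) := by
      simp only [bb, if_neg (Nat.succ_ne_zero n)]
      push_cast; ring
    show aa (n + 2) * cfQ aa bb (n + 1) + bb (n + 1) * cfQ aa bb n = _
    rw [ea, eb, h1, h2, Nat.factorial_succ (n + 1), Nat.factorial_succ n]
    push_cast
    ring

lemma cbrt_conv : CFConvergesTo aa bb ((2 : ℝ) ^ ((1 : ℝ) / 3)) := by
  refine ⟨?_, ⟨0, fun n _ => ?_⟩, ?_⟩
  · intro n
    by_cases h : n = 0
    · simp [bb, h]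
    · simp only [bb, if_neg h]
      have hn : 1 ≤ (n : ℚ) := by exact_mod_cast Nat.one_le_iff_ne_zero.mpr h
      nlinarith
  · rw [(cfQ_formula n).1]
    have h : (0 : ℚ) < 6 ^ n * Nat.factorial n := by
      have := Nat.factorial_pos n
      positivity
    exact h.ne'
  · have heq : ∀ n : ℕ, (sQ n : ℝ) = ((cfP aa bb n : ℝ) / (cfQ aa bb n : ℝ)) := by
      intro n
      rw [(cf_formula n).1, (cfQ_formula n).1]
      push_cast
      have hc : ((6 : ℝ) ^ n * (Nat.factorial n : ℝ)) ≠ 0 := by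
        have := Nat.factorial_pos n
        positivity
      field_simp
    exact (tendsto_S_half.congr fun n => (sQ_cast n).symm).congr fun n => heq n

lemma cbrt_polyType : CFPolyType aa bb := by
  refine ⟨Polynomial.C 9 * Polynomial.X - Polynomial.C 2,
    -(Polynomial.C 18) * Polynomial.X ^ 2 - Polynomial.C 6 * Polynomial.X, 2, ?_⟩
  intro n hn
  have h0 : n ≠ 0 := by omega
  have h1 : n ≠ 1 := by omega
  constructor
  · simp only [aa, if_neg h0, if_neg h1]
    simp
  · simp only [bb, if_neg h0]
    simp
    ring

theorem cbrt_two_CF :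
    let a : ℕ → ℚ := fun n =>
      if n = 0 then 1 else if n = 1 then 6 else 9 * (n : ℚ) - 2
    let b : ℕ → ℚ := fun n =>
      if n = 0 then 1 else -6 * (n : ℚ) * (3 * (n : ℚ) + 1)
    CFConvergesTo a b ((2 : ℝ) ^ ((1 : ℝ) / 3)) ∧
    CFType ((2 : ℝ) ^ ((1 : ℝ) / 3)) := by
  intro a b
  exact ⟨cbrt_conv, aa, bb, cbrt_polyType, cbrt_conv⟩
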